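/- Let f : ℝ^n → ℝ be twice continuously differentiable with f(x) ≥ 0 for all x, and suppose there is M > 0 such that the operator norm of the Hessian f''(x) is at most M for every x ∈ ℝ^n. Then |∇f(x)|² ≤ 2M·f(x) for all x ∈ ℝ^n. -/

import Mathlib

/-- Key quadratic upper bound: `f (x + v) ≤ f x + f'(x) v + M/2 ‖v‖²`. -/
lemma glaeser_aux
    (n : ℕ) (f : EuclideanSpace ℝ (Fin n) → ℝ)
    (hf : ContDiff ℝ 2 f)
    (M : ℝ) (hM : 0 < M)
    (hHess : ∀ x, ‖fderiv ℝ (fun y => fderiv ℝ f y) x‖ ≤ M)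
    (x v : EuclideanSpace ℝ (Fin n)) :
    f (x + v) ≤ f x + fderiv ℝ f x v + M / 2 * ‖v‖ ^ 2 := by
  have hdf : Differentiable ℝ f := hf.differentiable (by norm_num)
  have hdf' : Differentiable ℝ (fun y => fderiv ℝ f y) :=
    (hf.fderiv_right (m := 1) (by norm_num)).differentiable (by norm_num)
  have hlip : LipschitzWith M.toNNReal (fun y => fderiv ℝ f y) := by
    apply lipschitzWith_of_nnnorm_fderiv_le hdf'
    intro y
    rw [← norm_toNNReal]
    exact Real.toNNReal_le_toNNReal (hHess y)
  set g : ℝ → ℝ := fun t => f (x + t • v) - t * fderiv ℝ f x v - M * ‖v‖ ^ 2 * t ^ 2 / 2 with hg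
  have hline : ∀ t : ℝ, HasDerivAt (fun t : ℝ => x + t • v) v t := by
    intro t
    simpa using ((hasDerivAt_id t).smul_const v).const_add x
  have hgd : ∀ t : ℝ, HasDerivAt g
      (fderiv ℝ f (x + t • v) v - fderiv ℝ f x v - M * ‖v‖ ^ 2 * t) t := by
    intro t
    have h1 : HasDerivAt (fun t : ℝ => f (x + t • v)) (fderiv ℝ f (x + t • v) v) t :=
      (hdf (x + t • v)).hasFDerivAt.comp_hasDerivAt t (hline t)
    have h2 : HasDerivAt (fun t : ℝ => t * fderiv ℝ f x v) (fderiv ℝ f x v) t :=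
      hasDerivAt_mul_const _
    have h3 : HasDerivAt (fun t : ℝ => M * ‖v‖ ^ 2 * t ^ 2 / 2)
        (M * ‖v‖ ^ 2 * t) t := by
      have := ((hasDerivAt_pow 2 t).const_mul (M * ‖v‖ ^ 2)).div_const 2
      exact this.congr_deriv (by simp only [Nat.cast_ofNat, Nat.reduceSub, pow_one]; ring)
    exact (h1.sub h2).sub h3
  have hderiv_nonpos : ∀ t ∈ Set.Ioo (0 : ℝ) 1, deriv g t ≤ 0 := by
    intro t ht
    rw [(hgd t).deriv]
    have hdist : ‖fderiv ℝ f (x + t • v) - fderiv ℝ f x‖ ≤ M * (t * ‖v‖) := by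
      have hlipb := hlip.dist_le_mul (x + t • v) x
      rw [dist_eq_norm, dist_eq_norm, add_sub_cancel_left, Real.coe_toNNReal _ hM.le,
        norm_smul, Real.norm_eq_abs, abs_of_pos ht.1] at hlipb
      exact hlipb
    have hb : fderiv ℝ f (x + t • v) v - fderiv ℝ f x v ≤ M * (t * ‖v‖) * ‖v‖ := by
      have h := (fderiv ℝ f (x + t • v) - fderiv ℝ f x).le_opNorm v
      rw [ContinuousLinearMap.sub_apply] at h
      have habs : fderiv ℝ f (x + t • v) v - fderiv ℝ f x v ≤
          ‖fderiv ℝ f (x + t • v) v - fderiv ℝ f x v‖ := le_abs_self _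
      calc fderiv ℝ f (x + t • v) v - fderiv ℝ f x v
          ≤ ‖fderiv ℝ f (x + t • v) - fderiv ℝ f x‖ * ‖v‖ := le_trans habs h
        _ ≤ M * (t * ‖v‖) * ‖v‖ := by
            apply mul_le_mul_of_nonneg_right hdist (norm_nonneg _)
    nlinarith [hb]
  have hcont : ContinuousOn g (Set.Icc 0 1) := fun t _ => ((hgd t).differentiableAt).continuousAt.continuousWithinAt
  have hdiff : DifferentiableOn ℝ g (interior (Set.Icc (0:ℝ) 1)) := fun t _ =>
    ((hgd t).differentiableAt).differentiableWithinAt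
  have hanti : AntitoneOn g (Set.Icc 0 1) := by
    apply antitoneOn_of_deriv_nonpos (convex_Icc 0 1) hcont hdiff
    intro t ht
    rw [interior_Icc] at ht
    exact hderiv_nonpos t ht
  have := hanti (Set.left_mem_Icc.mpr zero_le_one) (Set.right_mem_Icc.mpr zero_le_one) zero_le_one
  simp only [hg, one_smul, one_mul, one_pow, zero_smul, add_zero, zero_mul, mul_zero,
    sub_zero, zero_pow, mul_one] at this
  nlinarith [this]

/-- Glaeser-type inequality: if `f : ℝ^n → ℝ` is `C²`, nonnegative, with
Hessian operator norm bounded by `M`, then `‖∇f(x)‖² ≤ 2 M f(x)` for all `x`. -/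
theorem glaeser_inequality
    (n : ℕ) (f : EuclideanSpace ℝ (Fin n) → ℝ)
    (hf : ContDiff ℝ 2 f) (hf0 : ∀ x, 0 ≤ f x)
    (M : ℝ) (hM : 0 < M)
    (hHess : ∀ x, ‖fderiv ℝ (fun y => fderiv ℝ f y) x‖ ≤ M) :
    ∀ x, ‖gradient f x‖ ^ 2 ≤ 2 * M * f x := by
  intro x
  set g := gradient f x with hgdef
  set v := (-(1 / M)) • g with hv
  have key := glaeser_aux n f hf M hM hHess x v
  have h0 : 0 ≤ f (x + v) := hf0 _
  have hfd : fderiv ℝ f x v = -(1 / M) * ‖g‖ ^ 2 := by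
    have : fderiv ℝ f x v = inner ℝ g v := by
      rw [hgdef]
      exact (InnerProductSpace.toDual_symm_apply).symm
    rw [this, hv, real_inner_smul_right, real_inner_self_eq_norm_sq]
  have hnv : ‖v‖ ^ 2 = (1 / M) ^ 2 * ‖g‖ ^ 2 := by
    rw [hv, norm_smul, mul_pow, Real.norm_eq_abs]
    congr 1
    rw [sq_abs]
    ring
  rw [hfd, hnv] at key
  have hM' : M ≠ 0 := ne_of_gt hM
  have heq : f x + -(1 / M) * ‖g‖ ^ 2 + M / 2 * ((1 / M) ^ 2 * ‖g‖ ^ 2)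
      = f x - ‖g‖ ^ 2 / (2 * M) := by
    field_simp
    ring
  rw [heq] at key
  have h1 : ‖g‖ ^ 2 / (2 * M) ≤ f x := by linarith
  rw [div_le_iff₀ (by positivity)] at h1
  linarith
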